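/- Let K ≥ 2 be an integer and α ∈ ℝ. Then 2·inf{ D_α(p‖q)/‖p−q‖₁² : p, q ∈ relint(Δ^K), p ≠ q } = inf{ Σ_{k=1}^K v_k²·γ_k^{α−2} : v ∈ T^K, γ ∈ relint(Δ^K) }, where T^K = {v ∈ ℝ^K : ‖v‖₁ = 1 and Σ_{k=1}^K v_k = 0}. -/

import Mathlib

open Finset Real

/-- The α-Tsallis entropy on the positive orthant (Shannon for α = 1, Burg for α = 0). -/
noncomputable def tsallis (α : ℝ) {K : ℕ} (p : Fin K → ℝ) : ℝ :=
  if α = 0 then ∑ k, Real.log (p k)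
  else if α = 1 then -∑ k, p k * Real.log (p k)
  else (∑ k, p k ^ α) / (α * (1 - α))

/-- The gradient of the α-Tsallis entropy on the positive orthant. -/
noncomputable def tsallisGrad (α : ℝ) {K : ℕ} (q : Fin K → ℝ) (k : Fin K) : ℝ :=
  if α = 0 then 1 / q k
  else if α = 1 then -(1 + Real.log (q k))
  else -(q k ^ (α - 1)) / (α - 1)

/-- The Bregman divergence D_α of the negative α-Tsallis entropy:
`D_α(p‖q) = -S_α(p) + S_α(q) + ⟨∇S_α(q), p - q⟩`. -/
noncomputable def breg (α : ℝ) {K : ℕ} (p q : Fin K → ℝ) : ℝ :=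
  -tsallis α p + tsallis α q + ∑ k, tsallisGrad α q k * (p k - q k)

/-- scalar entropy -/
noncomputable def sc (α x : ℝ) : ℝ :=
  if α = 0 then Real.log x else if α = 1 then -(x * Real.log x) else x ^ α / (α * (1 - α))

/-- scalar gradient -/
noncomputable def gc (α x : ℝ) : ℝ :=
  if α = 0 then 1 / x else if α = 1 then -(1 + Real.log x) else -(x ^ (α - 1)) / (α - 1)

lemma tsallis_eq (α : ℝ) {K : ℕ} (p : Fin K → ℝ) : tsallis α p = ∑ k, sc α (p k) := by
  unfold tsallis sc
  split_ifs with h0 h1 <;> simp [Finset.sum_div]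

lemma tsallisGrad_eq (α : ℝ) {K : ℕ} (q : Fin K → ℝ) (k : Fin K) :
    tsallisGrad α q k = gc α (q k) := rfl

lemma breg_eq (α : ℝ) {K : ℕ} (p q : Fin K → ℝ) :
    breg α p q = ∑ k, (sc α (q k) - sc α (p k) + gc α (q k) * (p k - q k)) := by
  unfold breg
  rw [tsallis_eq, tsallis_eq]
  simp only [tsallisGrad_eq]
  rw [Finset.sum_add_distrib, Finset.sum_sub_distrib]
  ring

lemma sc_hasDeriv (α : ℝ) {x : ℝ} (hx : 0 < x) : HasDerivAt (sc α) (gc α x) x := by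
  by_cases h0 : α = 0
  · have he : sc α = fun y => Real.log y := by funext y; simp [sc, h0]
    have hg : gc α x = x⁻¹ := by simp [gc, h0, one_div]
    rw [he, hg]; exact Real.hasDerivAt_log hx.ne'
  by_cases h1 : α = 1
  · have he : sc α = fun y => -(y * Real.log y) := by funext y; simp [sc, h0, h1]
    have hg : gc α x = -(1 + Real.log x) := by simp [gc, h0, h1]
    rw [he, hg]
    have := (Real.hasDerivAt_mul_log hx.ne').fun_neg
    refine this.congr_deriv ?_; ring
  · have he : sc α = fun y => y ^ α / (α * (1 - α)) := by funext y; simp [sc, h0, h1]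
    have hg : gc α x = -(x ^ (α - 1)) / (α - 1) := by simp [gc, h0, h1]
    rw [he, hg]
    have := (Real.hasDerivAt_rpow_const (p := α) (Or.inl hx.ne')).div_const (α * (1 - α))
    refine this.congr_deriv ?_
    have hα : α ≠ 0 := h0
    have hα1 : α - 1 ≠ 0 := sub_ne_zero.mpr h1
    have hα1' : (1 : ℝ) - α ≠ 0 := sub_ne_zero.mpr (fun h => h1 h.symm)
    field_simp
    ring

lemma gc_hasDeriv (α : ℝ) {x : ℝ} (hx : 0 < x) :
    HasDerivAt (gc α) (-(x ^ (α - 2))) x := by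
  by_cases h0 : α = 0
  · have he : gc α = fun y => y⁻¹ := by funext y; simp [gc, h0, one_div]
    rw [he]
    have h2 : x ^ (α - 2) = (x ^ 2)⁻¹ := by
      rw [h0]
      rw [show (0:ℝ) - 2 = -(2:ℕ) by norm_num, Real.rpow_neg hx.le, Real.rpow_natCast]
    rw [h2]
    exact hasDerivAt_inv hx.ne'
  by_cases h1 : α = 1
  · have he : gc α = fun y => -(1 + Real.log y) := by funext y; simp [gc, h0, h1]
    rw [he]
    have h2 : x ^ (α - 2) = x⁻¹ := by
      rw [h1, show (1:ℝ) - 2 = -1 by norm_num, Real.rpow_neg_one]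
    rw [h2]
    have := ((Real.hasDerivAt_log hx.ne').const_add 1).fun_neg
    convert this using 1
  · have he : gc α = fun y => -(y ^ (α - 1)) / (α - 1) := by funext y; simp [gc, h0, h1]
    rw [he]
    have := ((Real.hasDerivAt_rpow_const (p := α - 1) (Or.inl hx.ne')).fun_neg).div_const (α - 1)
    have hα1 : α - 1 ≠ 0 := sub_ne_zero.mpr h1
    refine this.congr_deriv ?_
    rw [show α - 1 - 1 = α - 2 by ring]
    field_simp

lemma nonneg_of_deriv2 (f f' f'' : ℝ → ℝ)
    (hd1 : ∀ t ∈ Set.Icc (0:ℝ) 1, HasDerivAt f (f' t) t)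
    (hd2 : ∀ t ∈ Set.Icc (0:ℝ) 1, HasDerivAt f' (f'' t) t)
    (h0 : f 0 = 0) (h0' : f' 0 = 0)
    (hpos : ∀ t ∈ Set.Icc (0:ℝ) 1, 0 ≤ f'' t) : 0 ≤ f 1 := by
  have h01 : (0:ℝ) ∈ Set.Icc (0:ℝ) 1 := by norm_num
  have h11 : (1:ℝ) ∈ Set.Icc (0:ℝ) 1 := by norm_num
  have hsub : Set.Ioo (0:ℝ) 1 ⊆ Set.Icc 0 1 := Set.Ioo_subset_Icc_self
  have hmono' : MonotoneOn f' (Set.Icc 0 1) := by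
    apply monotoneOn_of_deriv_nonneg (convex_Icc 0 1)
    · exact fun t ht => (hd2 t ht).continuousAt.continuousWithinAt
    · intro t ht
      rw [interior_Icc] at ht
      exact (hd2 t (hsub ht)).differentiableAt.differentiableWithinAt
    · intro t ht
      rw [interior_Icc] at ht
      rw [(hd2 t (hsub ht)).deriv]
      exact hpos t (hsub ht)
  have hf'nn : ∀ t ∈ Set.Icc (0:ℝ) 1, 0 ≤ f' t := by
    intro t ht
    calc (0:ℝ) = f' 0 := h0'.symm
    _ ≤ f' t := hmono' h01 ht ht.1
  have hmono : MonotoneOn f (Set.Icc 0 1) := by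
    apply monotoneOn_of_deriv_nonneg (convex_Icc 0 1)
    · exact fun t ht => (hd1 t ht).continuousAt.continuousWithinAt
    · intro t ht
      rw [interior_Icc] at ht
      exact (hd1 t (hsub ht)).differentiableAt.differentiableWithinAt
    · intro t ht
      rw [interior_Icc] at ht
      rw [(hd1 t (hsub ht)).deriv]
      exact hf'nn t (hsub ht)
  calc (0:ℝ) = f 0 := h0.symm
  _ ≤ f 1 := hmono h01 h11 (by norm_num)

/-- second order limit of the scalar Bregman divergence -/
lemma tendsto_F (α : ℝ) {x : ℝ} (hx : 0 < x) :
    Filter.Tendsto (fun h => (sc α x - sc α (x + h) + gc α x * h) / h ^ 2)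
      (nhdsWithin 0 {(0:ℝ)}ᶜ) (nhds (x ^ (α - 2) / 2)) := by
  have hposev : ∀ᶠ h in nhds (0:ℝ), 0 < x + h := by
    have hc : Filter.Tendsto (fun h : ℝ => x + h) (nhds 0) (nhds x) := by
      simpa using (continuous_const.fun_add continuous_id).tendsto (0:ℝ)
    exact hc.eventually (eventually_gt_nhds hx)
  have hposev' : ∀ᶠ h in nhdsWithin (0:ℝ) {(0:ℝ)}ᶜ, 0 < x + h :=
    eventually_nhdsWithin_of_eventually_nhds hposev
  have haff : ∀ h : ℝ, HasDerivAt (fun s : ℝ => x + s) 1 h := fun h =>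
    (hasDerivAt_id h).const_add x
  -- F has derivative
  have hFd : ∀ h : ℝ, 0 < x + h →
      HasDerivAt (fun h => sc α x - sc α (x + h) + gc α x * h)
        (gc α x - gc α (x + h)) h := by
    intro h hp
    have h1 : HasDerivAt (fun s : ℝ => sc α (x + s)) (gc α (x + h)) h := by
      have := (sc_hasDeriv α hp).comp h (haff h)
      rw [mul_one] at this; exact this
    have := ((hasDerivAt_const h (sc α x)).fun_sub h1).fun_add ((hasDerivAt_id h).const_mul (gc α x))
    refine this.congr_deriv ?_
    ring
  apply HasDerivAt.lhopital_zero_nhdsNE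
      (f' := fun h => gc α x - gc α (x + h)) (g' := fun h => 2 * h)
  · exact hposev'.mono fun h hp => hFd h hp
  · refine Filter.Eventually.of_forall fun h => ?_
    simpa using (hasDerivAt_pow 2 h)
  · exact eventually_mem_nhdsWithin.mono fun h (hh : h ≠ 0) => by
      simpa using hh
  · -- F → 0
    have hc : ContinuousAt (fun h => sc α x - sc α (x + h) + gc α x * h) 0 :=
      (hFd 0 (by simpa using hx)).continuousAt
    have h2 := hc.tendsto.mono_left (nhdsWithin_le_nhds (s := {(0:ℝ)}ᶜ))
    simpa using h2
  · have : Filter.Tendsto (fun h : ℝ => h ^ 2) (nhds 0) (nhds 0) := by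
      simpa using (continuous_pow 2).tendsto (0:ℝ)
    exact this.mono_left nhdsWithin_le_nhds
  · -- (gc x - gc(x+h))/(2h) → x^(α-2)/2
    have hslope : Filter.Tendsto (slope (gc α) x) (nhdsWithin x {x}ᶜ)
        (nhds (-(x ^ (α - 2)))) := hasDerivAt_iff_tendsto_slope.mp (gc_hasDeriv α hx)
    have hmap : Filter.Tendsto (fun h : ℝ => x + h) (nhdsWithin 0 {(0:ℝ)}ᶜ)
        (nhdsWithin x {x}ᶜ) := by
      rw [tendsto_nhdsWithin_iff]
      constructor
      · have hc : Filter.Tendsto (fun h : ℝ => x + h) (nhds 0) (nhds x) := by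
          simpa using (continuous_const.fun_add continuous_id).tendsto (0:ℝ)
        exact hc.mono_left nhdsWithin_le_nhds
      · filter_upwards [eventually_mem_nhdsWithin] with h (hh : h ≠ (0:ℝ))
        simpa using hh
    have hcomp := hslope.comp hmap
    have heq : ∀ h : ℝ, h ≠ 0 → slope (gc α) x (x + h) = (gc α (x + h) - gc α x) / h := by
      intro h hh
      rw [slope_def_field, add_sub_cancel_left]
    have : Filter.Tendsto (fun h : ℝ => (gc α x - gc α (x + h)) / (2 * h))
        (nhdsWithin 0 {(0:ℝ)}ᶜ) (nhds (-(-(x ^ (α - 2))) / 2)) := by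
      have := (hcomp.neg).div_const 2
      apply this.congr'
      filter_upwards [eventually_mem_nhdsWithin] with h (hh : h ≠ (0:ℝ))
      rw [Function.comp_apply, heq h hh]
      ring
    convert this using 2
    ring

lemma tendsto_coord (α : ℝ) {x : ℝ} (hx : 0 < x) (v : ℝ) :
    Filter.Tendsto (fun t => (sc α x - sc α (x + t * v) + gc α x * (t * v)) / t ^ 2)
      (nhdsWithin 0 (Set.Ioi (0:ℝ))) (nhds (v ^ 2 * x ^ (α - 2) / 2)) := by
  by_cases hv : v = 0
  · subst hv
    have hfun : (fun t : ℝ => (sc α x - sc α (x + t * 0) + gc α x * (t * 0)) / t ^ 2)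
        = fun _ => (0:ℝ) := by funext t; simp
    rw [hfun]
    simpa using (tendsto_const_nhds : Filter.Tendsto (fun _ : ℝ => (0:ℝ)) _ (nhds 0))
  · have hmap : Filter.Tendsto (fun t : ℝ => t * v) (nhdsWithin 0 (Set.Ioi (0:ℝ)))
        (nhdsWithin 0 {(0:ℝ)}ᶜ) := by
      rw [tendsto_nhdsWithin_iff]
      constructor
      · have : Filter.Tendsto (fun t : ℝ => t * v) (nhds 0) (nhds 0) := by
          simpa using (continuous_id.fun_mul continuous_const).tendsto (0:ℝ)
        exact this.mono_left nhdsWithin_le_nhds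
      · filter_upwards [self_mem_nhdsWithin] with t (ht : t ∈ Set.Ioi (0:ℝ))
        simp only [Set.mem_compl_iff, Set.mem_singleton_iff]
        exact mul_ne_zero (ne_of_gt ht) hv
    have hcomp := (tendsto_F α hx).comp hmap
    have h2 := hcomp.const_mul (v ^ 2)
    have h3 : Filter.Tendsto (fun t => (sc α x - sc α (x + t * v) + gc α x * (t * v)) / t ^ 2)
        (nhdsWithin 0 (Set.Ioi (0:ℝ))) (nhds (v ^ 2 * (x ^ (α - 2) / 2))) := by
      apply h2.congr'
      filter_upwards [self_mem_nhdsWithin] with t (ht : t ∈ Set.Ioi (0:ℝ))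
      have ht0 : t ≠ 0 := ne_of_gt ht
      rw [Function.comp_apply]
      field_simp
    convert h3 using 2
    ring

/-- The relative interior of the probability simplex Δ^K. -/
def relintSimplex (K : ℕ) : Set (Fin K → ℝ) :=
  {p | (∀ k, 0 < p k ∧ p k < 1) ∧ ∑ k, p k = 1}

/-- The ℓ¹ norm on ℝ^K. -/
noncomputable def l1 {K : ℕ} (x : Fin K → ℝ) : ℝ := ∑ k, |x k|

/-- Unit ℓ¹-sphere of the tangent space of the simplex. -/
def tangentSphere (K : ℕ) : Set (Fin K → ℝ) :=
  {v | (∑ k, |v k|) = 1 ∧ (∑ k, v k) = 0}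

theorem pinsker_const_via_quadratic_forms (K : ℕ) (hK : 2 ≤ K) (α : ℝ) :
    2 * sInf {r : ℝ | ∃ p ∈ relintSimplex K, ∃ q ∈ relintSimplex K,
        p ≠ q ∧ r = breg α p q / (l1 (p - q)) ^ 2} =
      sInf {r : ℝ | ∃ v ∈ tangentSphere K, ∃ γ ∈ relintSimplex K,
        r = ∑ k, (v k) ^ 2 * (γ k) ^ (α - 2)} := by
  set LSet := {r : ℝ | ∃ p ∈ relintSimplex K, ∃ q ∈ relintSimplex K,
      p ≠ q ∧ r = breg α p q / (l1 (p - q)) ^ 2} with hLS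
  set RSet := {r : ℝ | ∃ v ∈ tangentSphere K, ∃ γ ∈ relintSimplex K,
      r = ∑ k, (v k) ^ 2 * (γ k) ^ (α - 2)} with hRS
  set B := sInf RSet with hB
  have hRbdd : BddBelow RSet := by
    refine ⟨0, ?_⟩
    rintro r ⟨v, hv, γ, hγ, rfl⟩
    exact Finset.sum_nonneg fun k _ =>
      mul_nonneg (sq_nonneg _) (Real.rpow_nonneg (hγ.1 k).1.le _)
  -- pointwise Direction 1
  have key1 : ∀ r ∈ LSet, B ≤ 2 * r := by
    rintro r ⟨p, hp, q, hq, hpq, rfl⟩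
    set u : Fin K → ℝ := fun k => p k - q k with hu
    set L : ℝ := ∑ k, |u k| with hL
    have hLpos : 0 < L := by
      obtain ⟨k, hk⟩ : ∃ k, p k ≠ q k := by
        by_contra h; push_neg at h; exact hpq (funext h)
      have h1 : 0 < |u k| := abs_pos.mpr (sub_ne_zero.mpr hk)
      have h2 : |u k| ≤ L := by
        rw [hL]
        exact Finset.single_le_sum (f := fun i => |u i|) (fun i _ => abs_nonneg _)
          (Finset.mem_univ k)
      linarith
    have hl1 : l1 (p - q) = L := by simp [l1, hL, hu]
    have hsumu : ∑ k, u k = 0 := by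
      simp [hu, Finset.sum_sub_distrib, hp.2, hq.2]
    have hposc : ∀ t ∈ Set.Icc (0:ℝ) 1, ∀ k, 0 < q k + t * u k := by
      intro t ht k
      have h1 := (hq.1 k).1
      have h2 := (hp.1 k).1
      have he : q k + t * u k = (1 - t) * q k + t * p k := by rw [hu]; ring
      rw [he]
      rcases eq_or_lt_of_le ht.1 with h | h
      · rw [← h]; simpa using h1
      · have : (0:ℝ) ≤ (1 - t) * q k := mul_nonneg (by linarith [ht.2]) h1.le
        nlinarith
    have hlt1 : ∀ t ∈ Set.Icc (0:ℝ) 1, ∀ k, q k + t * u k < 1 := by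
      intro t ht k
      have h1 := (hq.1 k).2
      have h2 := (hp.1 k).2
      have he : q k + t * u k = (1 - t) * q k + t * p k := by rw [hu]; ring
      rw [he]
      rcases eq_or_lt_of_le ht.1 with h | h
      · rw [← h]; simpa using h1
      · have ha : (1 - t) * q k ≤ (1 - t) * 1 := by
          apply mul_le_mul_of_nonneg_left h1.le (by linarith [ht.2])
        have hb : t * p k < t * 1 := by exact (mul_lt_mul_iff_right₀ h).mpr h2
        nlinarith
    have hsumγ : ∀ t : ℝ, ∑ k, (q k + t * u k) = 1 := by
      intro t
      rw [Finset.sum_add_distrib, ← Finset.mul_sum, hsumu, hq.2]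
      ring
    -- derivatives along the segment
    have hd1 : ∀ t ∈ Set.Icc (0:ℝ) 1,
        HasDerivAt (fun t => ∑ k, (sc α (q k) - sc α (q k + t * u k) + gc α (q k) * (t * u k)))
          (∑ k, (gc α (q k) - gc α (q k + t * u k)) * u k) t := by
      intro t ht
      apply HasDerivAt.fun_sum
      intro k _
      have hc : HasDerivAt (fun s : ℝ => q k + s * u k) (u k) t := by
        simpa using ((hasDerivAt_id t).mul_const (u k)).const_add (q k)
      have h1 : HasDerivAt (fun s => sc α (q k + s * u k)) (gc α (q k + t * u k) * u k) t := by
        exact (sc_hasDeriv α (hposc t ht k)).comp t hc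
      have h2 : HasDerivAt (fun s : ℝ => gc α (q k) * (s * u k)) (gc α (q k) * u k) t := by
        simpa using ((hasDerivAt_id t).mul_const (u k)).const_mul (gc α (q k))
      have := ((hasDerivAt_const t (sc α (q k))).fun_sub h1).fun_add h2
      convert this using 1
      ring
    have hd2 : ∀ t ∈ Set.Icc (0:ℝ) 1,
        HasDerivAt (fun t => ∑ k, (gc α (q k) - gc α (q k + t * u k)) * u k)
          (∑ k, (q k + t * u k) ^ (α - 2) * u k ^ 2) t := by
      intro t ht
      apply HasDerivAt.fun_sum
      intro k _
      have hc : HasDerivAt (fun s : ℝ => q k + s * u k) (u k) t := by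
        simpa using ((hasDerivAt_id t).mul_const (u k)).const_add (q k)
      have h1 : HasDerivAt (fun s => gc α (q k + s * u k))
          (-((q k + t * u k) ^ (α - 2)) * u k) t := by
        exact (gc_hasDeriv α (hposc t ht k)).comp t hc
      have := ((hasDerivAt_const t (gc α (q k))).fun_sub h1).mul_const (u k)
      refine this.congr_deriv ?_
      ring
    -- lower bound on the second derivative
    have hg2B : ∀ t ∈ Set.Icc (0:ℝ) 1,
        B * L ^ 2 ≤ ∑ k, (q k + t * u k) ^ (α - 2) * u k ^ 2 := by
      intro t ht
      have hmem : (fun k => q k + t * u k) ∈ relintSimplex K :=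
        ⟨fun k => ⟨hposc t ht k, hlt1 t ht k⟩, hsumγ t⟩
      have hvmem : (fun k => u k / L) ∈ tangentSphere K := by
        constructor
        · have : ∑ k, |u k / L| = (∑ k, |u k|) / L := by
            rw [Finset.sum_div]
            exact Finset.sum_congr rfl fun k _ => by rw [abs_div, abs_of_pos hLpos]
          rw [this, ← hL, div_self hLpos.ne']
        · rw [← Finset.sum_div, hsumu, zero_div]
      have hBle : B ≤ ∑ k, (u k / L) ^ 2 * (q k + t * u k) ^ (α - 2) :=
        csInf_le hRbdd ⟨_, hvmem, _, hmem, rfl⟩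
      have heq : ∑ k, (q k + t * u k) ^ (α - 2) * u k ^ 2
          = L ^ 2 * ∑ k, (u k / L) ^ 2 * (q k + t * u k) ^ (α - 2) := by
        rw [Finset.mul_sum]
        refine Finset.sum_congr rfl fun k _ => ?_
        field_simp
      rw [heq]
      calc B * L ^ 2 = L ^ 2 * B := by ring
      _ ≤ _ := mul_le_mul_of_nonneg_left hBle (by positivity)
    -- second-order bound
    have hmain : 0 ≤ (fun t => (∑ k, (sc α (q k) - sc α (q k + t * u k) + gc α (q k) * (t * u k)))
        - B * L ^ 2 / 2 * t ^ 2) 1 := by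
      apply nonneg_of_deriv2
        (fun t => (∑ k, (sc α (q k) - sc α (q k + t * u k) + gc α (q k) * (t * u k)))
          - B * L ^ 2 / 2 * t ^ 2)
        (fun t => (∑ k, (gc α (q k) - gc α (q k + t * u k)) * u k) - B * L ^ 2 * t)
        (fun t => (∑ k, (q k + t * u k) ^ (α - 2) * u k ^ 2) - B * L ^ 2)
      · intro t ht
        have := (hd1 t ht).fun_sub ((hasDerivAt_pow 2 t).const_mul (B * L ^ 2 / 2))
        refine this.congr_deriv ?_
        push_cast
        ring
      · intro t ht
        have := (hd2 t ht).fun_sub ((hasDerivAt_id t).const_mul (B * L ^ 2))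
        refine this.congr_deriv ?_
        ring
      · simp
      · simp
      · intro t ht
        have := hg2B t ht
        simp only [sub_nonneg]
        linarith
    have hgb : ∑ k, (sc α (q k) - sc α (q k + 1 * u k) + gc α (q k) * (1 * u k))
        = breg α p q := by
      rw [breg_eq]
      refine Finset.sum_congr rfl fun k _ => ?_
      rw [show q k + 1 * u k = p k by rw [hu]; ring, show (1:ℝ) * u k = p k - q k by rw [hu]; ring]
    simp only [] at hmain
    rw [hgb] at hmain
    have hbreg : B * L ^ 2 / 2 ≤ breg α p q := by nlinarith
    rw [hl1]
    have hL2 : (0:ℝ) < L ^ 2 := by positivity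
    have h2 : B * L ^ 2 / 2 / L ^ 2 ≤ breg α p q / L ^ 2 :=
      div_le_div_of_nonneg_right hbreg hL2.le
    have h3 : B * L ^ 2 / 2 / L ^ 2 = B / 2 := by field_simp
    rw [h3] at h2
    linarith
  -- nonemptiness of RSet
  set i0 : Fin K := ⟨0, by omega⟩ with hi0
  set i1 : Fin K := ⟨1, by omega⟩ with hi1
  have hi01 : i0 ≠ i1 := by simp [hi0, hi1, Fin.ext_iff]
  have hKpos : (0:ℝ) < K := by
    have : 0 < K := by omega
    exact_mod_cast this
  have h2K : (2:ℝ) ≤ K := by exact_mod_cast hK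
  set γ0 : Fin K → ℝ := fun _ => (K:ℝ)⁻¹ with hγ0
  have hγ0mem : γ0 ∈ relintSimplex K := by
    constructor
    · intro k
      refine ⟨by positivity, ?_⟩
      rw [hγ0]
      exact inv_lt_one_of_one_lt₀ (by linarith)
    · rw [hγ0]
      simp [Finset.sum_const, Finset.card_univ]
      field_simp
  set v0 : Fin K → ℝ := fun k =>
    (if k = i0 then (2⁻¹:ℝ) else 0) - (if k = i1 then (2⁻¹:ℝ) else 0) with hv0
  have hv0abs : ∀ k, |v0 k| = (if k = i0 then (2⁻¹:ℝ) else 0) + (if k = i1 then (2⁻¹:ℝ) else 0) := by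
    intro k
    rw [hv0]
    by_cases h0 : k = i0 <;> by_cases h1 : k = i1
    · exact absurd (h0.symm.trans h1) hi01
    · simp [h0, h1, hi01, Ne.symm hi01]
    · simp [h0, h1, hi01, Ne.symm hi01]
    · simp [h0, h1]
  have hv0mem : v0 ∈ tangentSphere K := by
    constructor
    · rw [show ∑ k, |v0 k| = ∑ k, ((if k = i0 then (2⁻¹:ℝ) else 0)
          + (if k = i1 then (2⁻¹:ℝ) else 0)) from Finset.sum_congr rfl fun k _ => hv0abs k]
      rw [Finset.sum_add_distrib, Finset.sum_ite_eq' Finset.univ i0 (fun _ => (2⁻¹:ℝ)),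
        Finset.sum_ite_eq' Finset.univ i1 (fun _ => (2⁻¹:ℝ))]
      simp
      norm_num
    · rw [hv0]
      rw [Finset.sum_sub_distrib, Finset.sum_ite_eq' Finset.univ i0 (fun _ => (2⁻¹:ℝ)),
        Finset.sum_ite_eq' Finset.univ i1 (fun _ => (2⁻¹:ℝ))]
      simp
  have hRne : RSet.Nonempty := ⟨_, v0, hv0mem, γ0, hγ0mem, rfl⟩
  -- nonemptiness of LSet
  have hLne : LSet.Nonempty := by
    set p0 : Fin K → ℝ := fun k => γ0 k + (K:ℝ)⁻¹ * v0 k with hp0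
    have hKinv : (K:ℝ)⁻¹ ≤ 2⁻¹ := by
      apply inv_anti₀ (by norm_num) h2K
    have hKinvpos : 0 < (K:ℝ)⁻¹ := by positivity
    have hp0mem : p0 ∈ relintSimplex K := by
      constructor
      · intro k
        have hb : |v0 k| ≤ 2⁻¹ := by
          rw [hv0abs k]
          by_cases h0 : k = i0 <;> by_cases h1 : k = i1 <;>
            simp [h0, h1, hi01, Ne.symm hi01] <;> norm_num
        have hb' := abs_le.mp hb
        have : γ0 k = (K:ℝ)⁻¹ := rfl
        constructor
        · rw [hp0]
          simp only [hγ0]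
          nlinarith [hb'.1]
        · rw [hp0]
          simp only [hγ0]
          nlinarith [hb'.2]
      · rw [hp0]
        rw [Finset.sum_add_distrib, ← Finset.mul_sum, hv0mem.2, hγ0mem.2]
        ring
    have hp0ne : p0 ≠ γ0 := by
      intro h
      have := congrFun h i0
      rw [hp0] at this
      simp only [] at this
      have hv0i0 : v0 i0 = 2⁻¹ := by
        rw [hv0]
        simp [hi01]
      rw [hv0i0] at this
      nlinarith
    exact ⟨_, p0, hp0mem, γ0, hγ0mem, hp0ne, rfl⟩
  have hLbdd : BddBelow LSet := ⟨B / 2, fun r hr => by linarith [key1 r hr]⟩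
  have dir1 : B ≤ 2 * sInf LSet := by
    have h := le_csInf hLne (fun r hr => (by linarith [key1 r hr] : B / 2 ≤ r))
    linarith
  have dir2 : 2 * sInf LSet ≤ B := by
    rw [hB]
    apply le_csInf hRne
    rintro b ⟨v, hv, γ, hγ, rfl⟩
    have hne : (Finset.univ : Finset (Fin K)).Nonempty := ⟨i0, Finset.mem_univ _⟩
    set ρ := Finset.univ.inf' hne (fun k => min (γ k) (1 - γ k)) with hρ
    have hρpos : 0 < ρ := by
      rw [hρ, Finset.lt_inf'_iff]
      intro k _
      exact lt_min (hγ.1 k).1 (by linarith [(hγ.1 k).2])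
    have hvabs : ∀ k, |v k| ≤ 1 := by
      intro k
      rw [← hv.1]
      exact Finset.single_le_sum (f := fun i => |v i|) (fun i _ => abs_nonneg _)
        (Finset.mem_univ k)
    have hvne : ∃ k, v k ≠ 0 := by
      by_contra h
      push_neg at h
      have := hv.1
      simp [h] at this
    have hev : ∀ᶠ t in nhdsWithin 0 (Set.Ioi (0:ℝ)),
        sInf LSet ≤ breg α (fun k => γ k + t * v k) γ / t ^ 2 := by
      have hIoo : Set.Ioo (0:ℝ) ρ ∈ nhdsWithin 0 (Set.Ioi (0:ℝ)) :=
        Ioo_mem_nhdsGT_of_mem ⟨le_refl 0, hρpos⟩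
      filter_upwards [hIoo] with t ht
      obtain ⟨ht0, htρ⟩ := ht
      have habs : ∀ k, |t * v k| ≤ t := by
        intro k
        rw [abs_mul, abs_of_pos ht0]
        nlinarith [hvabs k, abs_nonneg (v k)]
      have hpk : ∀ k, 0 < γ k + t * v k ∧ γ k + t * v k < 1 := by
        intro k
        have h1 : ρ ≤ min (γ k) (1 - γ k) := Finset.inf'_le _ (Finset.mem_univ k)
        have h3 := abs_le.mp (habs k)
        have htγ : t < γ k := lt_of_lt_of_le htρ (h1.trans (min_le_left _ _))
        have htγ' : t < 1 - γ k := lt_of_lt_of_le htρ (h1.trans (min_le_right _ _))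
        exact ⟨by linarith [h3.1], by linarith [h3.2]⟩
      have hpsum : ∑ k, (γ k + t * v k) = 1 := by
        rw [Finset.sum_add_distrib, ← Finset.mul_sum, hv.2, hγ.2]
        ring
      have hpne : (fun k => γ k + t * v k) ≠ γ := by
        obtain ⟨k, hk⟩ := hvne
        intro h
        have h2 : γ k + t * v k = γ k := congrFun h k
        have h3 : t * v k = 0 := by linarith
        rcases mul_eq_zero.mp h3 with h' | h'
        · exact ht0.ne' h'
        · exact hk h'
      have hl1t : l1 ((fun k => γ k + t * v k) - γ) = t := by
        simp only [l1, Pi.sub_apply]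
        have : ∑ k, |γ k + t * v k - γ k| = ∑ k, t * |v k| :=
          Finset.sum_congr rfl fun k _ => by
            rw [show γ k + t * v k - γ k = t * v k from by ring, abs_mul, abs_of_pos ht0]
        rw [this, ← Finset.mul_sum, hv.1, mul_one]
      apply csInf_le hLbdd
      exact ⟨_, ⟨hpk, hpsum⟩, γ, hγ, hpne, by rw [hl1t]⟩
    have htend : Filter.Tendsto (fun t => breg α (fun k => γ k + t * v k) γ / t ^ 2)
        (nhdsWithin 0 (Set.Ioi (0:ℝ))) (nhds ((∑ k, v k ^ 2 * γ k ^ (α - 2)) / 2)) := by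
      have hsum : Filter.Tendsto
          (fun t => ∑ k, (sc α (γ k) - sc α (γ k + t * v k) + gc α (γ k) * (t * v k)) / t ^ 2)
          (nhdsWithin 0 (Set.Ioi (0:ℝ))) (nhds (∑ k, v k ^ 2 * γ k ^ (α - 2) / 2)) := by
        apply tendsto_finset_sum
        intro k _
        exact tendsto_coord α (hγ.1 k).1 (v k)
      rw [show (∑ k, v k ^ 2 * γ k ^ (α - 2)) / 2 = ∑ k, v k ^ 2 * γ k ^ (α - 2) / 2 from
        Finset.sum_div _ _ _]
      apply hsum.congr
      intro t
      rw [breg_eq, Finset.sum_div]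
      refine Finset.sum_congr rfl fun k _ => ?_
      simp only [add_sub_cancel_left]
    have hfin := ge_of_tendsto htend hev
    linarith
  linarith
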